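/- For every d ∈ ℕ and every j ∈ {1, …, 2d+1}, the product over all i ∈ {1, …, 2d+1} with i ≠ j of i²/(i² − j²) has absolute value at most 2; that is, |∏_{i∈{1,…,2d+1}, i≠j} i²/(i² − j²)| ≤ 2. -/
import Mathlib

open Finset

private lemma prod_Icc_one_id (m : ℕ) : ∏ i ∈ Icc 1 m, i = m.factorial := by
  rw [← Finset.prod_range_add_one_eq_factorial]
  refine Finset.prod_nbij' (fun i => i - 1) (fun i => i + 1) ?_ ?_ ?_ ?_ ?_ <;>
    simp only [Finset.mem_Icc, Finset.mem_range] <;> intros <;> first | trivial | omega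

private lemma fac_Icc (j : ℕ) : ∀ m, j ≤ m →
    j.factorial * ∏ i ∈ Icc (j+1) m, i = m.factorial := by
  intro m hm
  induction m, hm using Nat.le_induction with
  | base => rw [Finset.Icc_eq_empty (by omega)]; simp
  | succ m hm ih =>
    rw [Finset.prod_Icc_succ_top (by omega), ← mul_assoc, ih, Nat.factorial_succ, mul_comm]

private lemma prod_reflect (j : ℕ) : ∏ i ∈ Icc 1 (j-1), (j - i) = (j-1).factorial := by
  rw [← prod_Icc_one_id]
  refine Finset.prod_nbij' (fun i => j - i) (fun i => j - i) ?_ ?_ ?_ ?_ ?_ <;>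
    simp only [Finset.mem_Icc] <;> intros <;> first | trivial | omega

private lemma prod_shift (j n : ℕ) : ∏ i ∈ Icc (j+1) n, (i - j) = (n-j).factorial := by
  rw [← prod_Icc_one_id]
  refine Finset.prod_nbij' (fun i => i - j) (fun i => i + j) ?_ ?_ ?_ ?_ ?_ <;>
    simp only [Finset.mem_Icc] <;> intros <;> first | trivial | omega

private lemma prod_plus (j n : ℕ) :
    j.factorial * ∏ i ∈ Icc 1 n, (i + j) = (n + j).factorial := by
  have h : ∏ i ∈ Icc 1 n, (i + j) = ∏ i ∈ Icc (j+1) (n+j), i := by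
    refine Finset.prod_nbij' (fun i => i + j) (fun i => i - j) ?_ ?_ ?_ ?_ ?_ <;>
      simp only [Finset.mem_Icc] <;> intros <;> first | trivial | omega
  rw [h, fac_Icc j (n+j) (by omega)]

/-- Lagrange-coefficient product bound: for every `d ∈ ℕ` and every
`j ∈ {1, …, 2d+1}`, `|∏_{i ∈ {1,…,2d+1}, i ≠ j} i²/(i² − j²)| ≤ 2`. -/
theorem lagrange_product_bound (d j : ℕ) (hj1 : 1 ≤ j) (hj2 : j ≤ 2 * d + 1) :
    |∏ i ∈ (Finset.Icc 1 (2 * d + 1)).erase j,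
        ((i : ℝ) ^ 2 / ((i : ℝ) ^ 2 - (j : ℝ) ^ 2))| ≤ 2 := by
  set n := 2 * d + 1 with hn
  set S := (Finset.Icc 1 n).erase j with hS
  have hjmem : j ∈ Finset.Icc 1 n := by simp only [Finset.mem_Icc]; omega
  -- the three natural-number products
  set A := ∏ i ∈ S, i with hA
  set B := ∏ i ∈ S, ((i - j) + (j - i)) with hB
  set C := ∏ i ∈ S, (i + j) with hC
  -- evaluate them
  have hAval : j * A = n.factorial := by
    rw [hA, hS, ← prod_Icc_one_id n]
    exact Finset.mul_prod_erase _ (fun i => i) hjmem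
  have hSsplit : S = Icc 1 (j-1) ∪ Icc (j+1) n := by
    ext i
    simp only [hS, Finset.mem_erase, Finset.mem_Icc, Finset.mem_union]
    omega
  have hdisj : Disjoint (Icc 1 (j-1)) (Icc (j+1) n) := by
    rw [Finset.disjoint_left]
    intro a ha hb
    simp only [Finset.mem_Icc] at ha hb
    omega
  have hBval : B = (j-1).factorial * (n-j).factorial := by
    rw [hB, hSsplit, Finset.prod_union hdisj]
    congr 1
    · rw [← prod_reflect j]
      refine Finset.prod_congr rfl fun i hi => ?_
      simp only [Finset.mem_Icc] at hi; omega
    · rw [← prod_shift j n]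
      refine Finset.prod_congr rfl fun i hi => ?_
      simp only [Finset.mem_Icc] at hi; omega
  have hCval : j.factorial * ((j + j) * C) = (n + j).factorial := by
    rw [hC, hS, ← prod_plus j n]
    congr 1
    exact Finset.mul_prod_erase _ (fun i => i + j) hjmem
  -- key factorial inequality
  have key : n.factorial ^ 2 ≤ (n - j).factorial * (n + j).factorial := by
    have e1 : n.choose j * j.factorial * (n - j).factorial = n.factorial :=
      Nat.choose_mul_factorial_mul_factorial (by omega)
    have e2 : (n + j).choose j * j.factorial * n.factorial = (n + j).factorial := by
      have := Nat.choose_mul_factorial_mul_factorial (Nat.le_add_left j n)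
      simpa using this
    have e3 : n.choose j ≤ (n + j).choose j := Nat.choose_le_choose j (Nat.le_add_right n j)
    calc n.factorial ^ 2 = (n.choose j * j.factorial * (n - j).factorial) * n.factorial := by
          rw [e1]; ring
      _ ≤ ((n + j).choose j * j.factorial * (n - j).factorial) * n.factorial := by
          have : n.choose j * j.factorial * (n - j).factorial ≤
              (n + j).choose j * j.factorial * (n - j).factorial :=
            Nat.mul_le_mul_right _ (Nat.mul_le_mul_right _ e3)
          exact Nat.mul_le_mul_right _ this
      _ = (n - j).factorial * ((n + j).choose j * j.factorial * n.factorial) := by ring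
      _ = (n - j).factorial * (n + j).factorial := by rw [e2]
  -- natural-number inequality A² ≤ 2 B C
  have hjB : j * B = j.factorial * (n - j).factorial := by
    rw [hBval, ← mul_assoc, Nat.mul_factorial_pred (by omega)]
  have hnat : A ^ 2 ≤ 2 * (B * C) := by
    have hmul : 0 < 2 * j * j.factorial * j := by positivity
    refine Nat.le_of_mul_le_mul_right ?_ hmul
    calc A ^ 2 * (2 * j * j.factorial * j)
        = (j * A) ^ 2 * (2 * j.factorial) := by ring
      _ = n.factorial ^ 2 * (2 * j.factorial) := by rw [hAval]
      _ ≤ ((n - j).factorial * (n + j).factorial) * (2 * j.factorial) :=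
          Nat.mul_le_mul_right _ key
      _ = (j * B) * (j.factorial * ((j + j) * C)) * 2 := by rw [hjB, hCval]; ring
      _ = 2 * (B * C) * (2 * j * j.factorial * j) := by ring
  -- positivity of B * C
  have hBpos : 0 < B := by
    rw [hBval]; positivity
  have hCpos : 0 < C := by
    have := hCval
    rcases Nat.eq_zero_or_pos C with h | h
    · rw [h] at this; simp at this
      exact absurd this (Nat.factorial_ne_zero _).symm
    · exact h
  -- now the real computation
  rw [Finset.abs_prod]
  have hpt : ∀ i ∈ S, |(i:ℝ)^2/((i:ℝ)^2-(j:ℝ)^2)| =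
      ((i^2 : ℕ):ℝ)/(((((i-j)+(j-i))*(i+j)) : ℕ):ℝ) := by
    intro i hi
    simp only [hS, Finset.mem_erase, Finset.mem_Icc] at hi
    obtain ⟨hne, h1i, hin⟩ := hi
    rw [abs_div, abs_of_nonneg (by positivity : (0:ℝ) ≤ (i:ℝ)^2)]
    congr 1
    · push_cast; ring
    · rcases Nat.lt_or_ge i j with hij | hij
      · have he : (i-j)+(j-i) = j-i := by omega
        rw [he]
        have hc : (i:ℝ) < (j:ℝ) := by exact_mod_cast hij
        rw [abs_of_nonpos (by nlinarith)]
        push_cast [Nat.cast_sub hij.le]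
        ring
      · have hij' : j < i := by omega
        have he : (i-j)+(j-i) = i-j := by omega
        rw [he]
        have hc : (j:ℝ) < (i:ℝ) := by exact_mod_cast hij'
        rw [abs_of_nonneg (by nlinarith)]
        push_cast [Nat.cast_sub hij'.le]
        ring
  rw [Finset.prod_congr rfl hpt, Finset.prod_div_distrib, ← Nat.cast_prod, ← Nat.cast_prod,
    Finset.prod_mul_distrib]
  rw [div_le_iff₀ (by exact_mod_cast Nat.mul_pos hBpos hCpos)]
  have : ∏ i ∈ S, i ^ 2 = A ^ 2 := by rw [hA, Finset.prod_pow]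
  rw [this]
  exact_mod_cast hnat.trans_eq (by ring)
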